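/- Let q, a, b be real numbers with q > 0 and a, b > 1, and let x ∈ (0,1). Define ψ(p) = ( Φ_{p,q}(a,b;x) / ((1+a)^p (1+b)^q) − x/(1−x) ) · (x−1)/(p x) for p > 0. Then ψ satisfies the Turán-type inequality ψ(p) ψ(p+2) − ψ(p+1)^2 ≥ 0 for all p ∈ (0,∞). -/

import Mathlib

open MeasureTheory ENNReal

/-- The generalized polylogarithm with real parameters. -/
noncomputable def genPolylogR (p q a b x : ℝ) : ℝ :=
  ∑' k : ℕ, ((1 + a) ^ p * (1 + b) ^ q /
      (((k : ℝ) + 1 + a) ^ p * ((k : ℝ) + 1 + b) ^ q)) * x ^ (k + 1)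

/-- The function `ψ(p)` built from the generalized polylogarithm. -/
noncomputable def psiFun (q a b x : ℝ) (p : ℝ) : ℝ :=
  (genPolylogR p q a b x / ((1 + a) ^ p * (1 + b) ^ q) - x / (1 - x)) * (x - 1) / (p * x)

/-- The lintegral of `t ^ (c-1)` over `(r, 1]`. -/
lemma lint_rpow {r : ℝ} (hr0 : 0 < r) (hr1 : r < 1) {c : ℝ} (hc : 0 < c) :
    ∫⁻ t in Set.Ioc r 1, ENNReal.ofReal (t ^ (c - 1)) =
      ENNReal.ofReal ((1 - r ^ c) / c) := by
  have hcont : ContinuousOn (fun t : ℝ => t ^ (c - 1)) (Set.Icc r 1) := by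
    apply ContinuousOn.rpow_const continuousOn_id
    intro t ht
    exact Or.inl (ne_of_gt (lt_of_lt_of_le hr0 ht.1))
  have hint : IntegrableOn (fun t : ℝ => t ^ (c - 1)) (Set.Ioc r 1) :=
    (hcont.integrableOn_compact isCompact_Icc).mono_set Set.Ioc_subset_Icc_self
  rw [← ofReal_integral_eq_lintegral_ofReal hint]
  · congr 1
    rw [← intervalIntegral.integral_of_le hr1.le,
      integral_rpow (Or.inl (by linarith : (-1:ℝ) < c - 1)), sub_add_cancel, Real.one_rpow]
  · filter_upwards [ae_restrict_mem measurableSet_Ioc] with t ht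
    exact Real.rpow_nonneg (hr0.trans ht.1).le _

/-- Turán inequality for `φ(p) = (1 - r^p)/p`, via Cauchy–Schwarz for the moment
representation `φ(p) = ∫_r^1 t^(p-1) dt`. -/
lemma turan_phi {r p : ℝ} (hr0 : 0 < r) (hr1 : r < 1) (hp : 0 < p) :
    ((1 - r ^ (p + 1)) / (p + 1)) ^ 2 ≤
      ((1 - r ^ p) / p) * ((1 - r ^ (p + 2)) / (p + 2)) := by
  set μ := volume.restrict (Set.Ioc r (1:ℝ)) with hμ
  set f : ℝ → ℝ≥0∞ := fun t => ENNReal.ofReal (t ^ ((p - 1) / 2)) with hfdef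
  set g : ℝ → ℝ≥0∞ := fun t => ENNReal.ofReal (t ^ ((p + 1) / 2)) with hgdef
  have hfm : AEMeasurable f μ := ((measurable_id.pow_const _).ennreal_ofReal).aemeasurable
  have hgm : AEMeasurable g μ := ((measurable_id.pow_const _).ennreal_ofReal).aemeasurable
  have hpq : (2:ℝ).HolderConjugate 2 := Real.holderConjugate_iff.mpr ⟨one_lt_two, by norm_num⟩
  have CS := ENNReal.lintegral_mul_le_Lp_mul_Lq μ hpq hfm hgm
  have h1 : ∫⁻ t, (f * g) t ∂μ = ENNReal.ofReal ((1 - r ^ (p + 1)) / (p + 1)) := by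
    rw [hμ, ← lint_rpow hr0 hr1 (by linarith : (0:ℝ) < p + 1)]
    apply setLIntegral_congr_fun measurableSet_Ioc
    intro t ht
    have ht0 : 0 < t := hr0.trans ht.1
    simp only [Pi.mul_apply, hfdef, hgdef]
    rw [← ENNReal.ofReal_mul (Real.rpow_nonneg ht0.le _), ← Real.rpow_add ht0,
      show (p-1)/2 + (p+1)/2 = p + 1 - 1 by ring]
  have h2 : ∫⁻ t, f t ^ (2:ℝ) ∂μ = ENNReal.ofReal ((1 - r ^ p) / p) := by
    rw [hμ, ← lint_rpow hr0 hr1 hp]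
    apply setLIntegral_congr_fun measurableSet_Ioc
    intro t ht
    have ht0 : 0 < t := hr0.trans ht.1
    simp only [hfdef]
    rw [ENNReal.ofReal_rpow_of_nonneg (Real.rpow_nonneg ht0.le _) (by norm_num : (0:ℝ) ≤ 2),
      ← Real.rpow_mul ht0.le, show (p-1)/2 * 2 = p - 1 by ring]
  have h3 : ∫⁻ t, g t ^ (2:ℝ) ∂μ = ENNReal.ofReal ((1 - r ^ (p + 2)) / (p + 2)) := by
    rw [hμ, ← lint_rpow hr0 hr1 (by linarith : (0:ℝ) < p + 2)]
    apply setLIntegral_congr_fun measurableSet_Ioc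
    intro t ht
    have ht0 : 0 < t := hr0.trans ht.1
    simp only [hgdef]
    rw [ENNReal.ofReal_rpow_of_nonneg (Real.rpow_nonneg ht0.le _) (by norm_num : (0:ℝ) ≤ 2),
      ← Real.rpow_mul ht0.le, show (p+1)/2 * 2 = p + 2 - 1 by ring]
  rw [h1, h2, h3] at CS
  have hA : (0:ℝ) ≤ (1 - r ^ p) / p := by
    have : r ^ p ≤ 1 := Real.rpow_le_one hr0.le hr1.le hp.le
    apply div_nonneg _ hp.le; linarith
  have hB : (0:ℝ) ≤ (1 - r ^ (p+2)) / (p+2) := by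
    have : r ^ (p+2) ≤ 1 := Real.rpow_le_one hr0.le hr1.le (by linarith)
    apply div_nonneg _ (by linarith); linarith
  have hC : (0:ℝ) ≤ (1 - r ^ (p+1)) / (p+1) := by
    have : r ^ (p+1) ≤ 1 := Real.rpow_le_one hr0.le hr1.le (by linarith)
    apply div_nonneg _ (by linarith); linarith
  have key : ENNReal.ofReal (((1 - r ^ (p+1)) / (p+1))^2) ≤
      ENNReal.ofReal (((1 - r ^ p) / p) * ((1 - r ^ (p+2)) / (p+2))) := by
    calc ENNReal.ofReal (((1 - r ^ (p+1)) / (p+1))^2)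
        = ENNReal.ofReal ((1 - r ^ (p+1)) / (p+1)) ^ (2:ℕ) := by
          rw [← ENNReal.ofReal_pow hC]
      _ ≤ ((ENNReal.ofReal ((1 - r ^ p) / p)) ^ ((1:ℝ)/2) *
            (ENNReal.ofReal ((1 - r ^ (p+2)) / (p+2))) ^ ((1:ℝ)/2)) ^ (2:ℕ) :=
          pow_le_pow_left' CS 2
      _ = ENNReal.ofReal ((1 - r ^ p) / p) * ENNReal.ofReal ((1 - r ^ (p+2)) / (p+2)) := by
          rw [mul_pow, ← ENNReal.rpow_natCast (_ ^ ((1:ℝ)/2)) 2,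
            ← ENNReal.rpow_natCast (_ ^ ((1:ℝ)/2)) 2, ← ENNReal.rpow_mul, ← ENNReal.rpow_mul]
          norm_num
      _ = ENNReal.ofReal (((1 - r ^ p) / p) * ((1 - r ^ (p+2)) / (p+2))) := by
          rw [ENNReal.ofReal_mul hA]
  rw [ENNReal.ofReal_le_ofReal_iff (by positivity)] at key
  exact key

/-- Sums of "log-convex triples" are log-convex triples. -/
lemma turan_add {u1 u2 u3 v1 v2 v3 : ℝ} (hu1 : 0 ≤ u1) (hu2 : 0 ≤ u2) (hu3 : 0 ≤ u3)
    (hv1 : 0 ≤ v1) (hv2 : 0 ≤ v2) (hv3 : 0 ≤ v3)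
    (h1 : u2 ^ 2 ≤ u1 * u3) (h2 : v2 ^ 2 ≤ v1 * v3) :
    (u2 + v2) ^ 2 ≤ (u1 + v1) * (u3 + v3) := by
  have hq : (2 * (u2 * v2)) ^ 2 ≤ (u1 * v3 + u3 * v1) ^ 2 := by
    nlinarith [sq_nonneg (u1 * v3 - u3 * v1), mul_le_mul h1 h2 (sq_nonneg v2) (mul_nonneg hu1 hu3)]
  have hcross : 2 * (u2 * v2) ≤ u1 * v3 + u3 * v1 := by
    have h2n : 0 ≤ 2 * (u2 * v2) := by positivity
    have hSn : 0 ≤ u1 * v3 + u3 * v1 := by positivity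
    nlinarith
  nlinarith

/-- Turán inequality for `h(p) = (1 - s·r^p)/p`. -/
lemma turan_h {r s p : ℝ} (hr0 : 0 < r) (hr1 : r < 1) (hs0 : 0 ≤ s) (hs1 : s ≤ 1) (hp : 0 < p) :
    ((1 - s * r ^ (p + 1)) / (p + 1)) ^ 2 ≤
      ((1 - s * r ^ p) / p) * ((1 - s * r ^ (p + 2)) / (p + 2)) := by
  have hphi : ∀ α : ℝ, 0 < α → 0 ≤ (1 - r ^ α) / α := by
    intro α hα
    have : r ^ α ≤ 1 := Real.rpow_le_one hr0.le hr1.le hα.le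
    exact div_nonneg (by linarith) hα.le
  have hsplit : ∀ α : ℝ, 0 < α →
      (1 - s * r ^ α) / α = (1 - s) / α + s * ((1 - r ^ α) / α) := by
    intro α hα
    field_simp
    ring
  rw [hsplit p hp, hsplit (p+1) (by linarith), hsplit (p+2) (by linarith)]
  apply turan_add
  · exact div_nonneg (by linarith) hp.le
  · exact div_nonneg (by linarith) (by linarith)
  · exact div_nonneg (by linarith) (by linarith)
  · exact mul_nonneg hs0 (hphi p hp)
  · exact mul_nonneg hs0 (hphi (p+1) (by linarith))
  · exact mul_nonneg hs0 (hphi (p+2) (by linarith))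
  · rw [div_pow, div_mul_div_comm, show (1-s)*(1-s) = (1-s)^2 by ring]
    exact div_le_div_of_nonneg_left (by positivity : (0:ℝ) ≤ (1-s)^2)
      (by positivity : (0:ℝ) < p*(p+2)) (by nlinarith : p*(p+2) ≤ (p+1)^2)
  · calc (s * ((1 - r ^ (p+1))/(p+1)))^2 = s^2 * ((1 - r ^ (p+1))/(p+1))^2 := by ring
      _ ≤ s^2 * (((1 - r ^ p)/p) * ((1 - r ^ (p+2))/(p+2))) :=
          mul_le_mul_of_nonneg_left (turan_phi hr0 hr1 hp) (sq_nonneg s)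
      _ = (s * ((1 - r ^ p)/p)) * (s * ((1 - r ^ (p+2))/(p+2))) := by ring

/-- Cauchy–Schwarz/Turán inequality for infinite sums. -/
lemma tsum_turan {f b c : ℕ → ℝ} (hf : ∀ k, 0 ≤ f k) (hb : ∀ k, 0 ≤ b k) (hc : ∀ k, 0 ≤ c k)
    (hfb : ∀ k, f k ^ 2 ≤ b k * c k) (hB : Summable b) (hC : Summable c) :
    (∑' k, f k) ^ 2 ≤ (∑' k, b k) * (∑' k, c k) := by
  have hfle : ∀ k, f k ≤ (b k + c k) / 2 := by
    intro k
    nlinarith [hfb k, hf k, hb k, hc k, sq_nonneg (b k - c k), sq_nonneg (f k - (b k + c k)/2)]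
  have hF : Summable f :=
    Summable.of_nonneg_of_le hf hfle ((hB.add hC).div_const 2)
  have hTb : 0 ≤ ∑' k, b k := tsum_nonneg hb
  have hTc : 0 ≤ ∑' k, c k := tsum_nonneg hc
  have key : ∀ s : Finset ℕ, ∑ k ∈ s, f k ≤ Real.sqrt ((∑' k, b k) * (∑' k, c k)) := by
    intro s
    have hCS := Finset.sum_sq_le_sum_mul_sum_of_sq_eq_mul s
      (r := fun k => Real.sqrt (b k * c k)) (f := b) (g := c)
      (fun i _ => hb i) (fun i _ => hc i)
      (fun i _ => Real.sq_sqrt (mul_nonneg (hb i) (hc i)))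
    have hsf : ∑ k ∈ s, f k ≤ ∑ k ∈ s, Real.sqrt (b k * c k) := by
      apply Finset.sum_le_sum
      intro i _
      have : f i = Real.sqrt (f i ^ 2) := (Real.sqrt_sq (hf i)).symm
      rw [this]
      exact Real.sqrt_le_sqrt (hfb i)
    have hsum_le : (∑ k ∈ s, f k) ^ 2 ≤ (∑' k, b k) * (∑' k, c k) := by
      calc (∑ k ∈ s, f k) ^ 2 ≤ (∑ k ∈ s, Real.sqrt (b k * c k)) ^ 2 :=
            pow_le_pow_left₀ (Finset.sum_nonneg fun i _ => hf i) hsf 2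
        _ ≤ (∑ k ∈ s, b k) * (∑ k ∈ s, c k) := hCS
        _ ≤ (∑' k, b k) * (∑' k, c k) :=
            mul_le_mul (Summable.sum_le_tsum s (fun i _ => hb i) hB)
              (Summable.sum_le_tsum s (fun i _ => hc i) hC)
              (Finset.sum_nonneg fun i _ => hc i) hTb
    have := Real.sqrt_le_sqrt hsum_le
    rwa [Real.sqrt_sq (Finset.sum_nonneg fun i _ => hf i)] at this
  have hle : ∑' k, f k ≤ Real.sqrt ((∑' k, b k) * (∑' k, c k)) := Summable.tsum_le_of_sum_le hF key
  calc (∑' k, f k) ^ 2 ≤ Real.sqrt ((∑' k, b k) * (∑' k, c k)) ^ 2 :=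
        pow_le_pow_left₀ (tsum_nonneg hf) hle 2
    _ = (∑' k, b k) * (∑' k, c k) := Real.sq_sqrt (mul_nonneg hTb hTc)

/-- The `k`-th term of the series representation of `ψ`. -/
noncomputable def psiTerm (q a b x α : ℝ) (k : ℕ) : ℝ :=
  ((1 - x) / x * x ^ (k + 1)) *
    ((1 - ((((k : ℝ) + 1 + b) ^ q)⁻¹) * ((((k : ℝ) + 1 + a)⁻¹) ^ α)) / α)

/-- Series representation of `ψ`. -/
lemma psi_rep (q a b x : ℝ) (hq : 0 < q) (ha : 1 < a) (hb : 1 < b)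
    (hx : x ∈ Set.Ioo (0 : ℝ) 1) {p : ℝ} (hp : 0 < p) :
    psiFun q a b x p = ∑' k : ℕ, psiTerm q a b x p k := by
  obtain ⟨hx0, hx1⟩ := hx
  have hA : ∀ k : ℕ, (1 : ℝ) < (k : ℝ) + 1 + a := by
    intro k; have := Nat.cast_nonneg (α := ℝ) k; linarith
  have hB : ∀ k : ℕ, (1 : ℝ) < (k : ℝ) + 1 + b := by
    intro k; have := Nat.cast_nonneg (α := ℝ) k; linarith
  have hApow : ∀ k : ℕ, (1 : ℝ) ≤ ((k : ℝ) + 1 + a) ^ p := by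
    intro k
    calc (1:ℝ) = 1 ^ p := (Real.one_rpow p).symm
      _ ≤ ((k : ℝ) + 1 + a) ^ p := Real.rpow_le_rpow zero_le_one (hA k).le hp.le
  have hBpow : ∀ k : ℕ, (1 : ℝ) ≤ ((k : ℝ) + 1 + b) ^ q := by
    intro k
    calc (1:ℝ) = 1 ^ q := (Real.one_rpow q).symm
      _ ≤ ((k : ℝ) + 1 + b) ^ q := Real.rpow_le_rpow zero_le_one (hB k).le hq.le
  set c : ℕ → ℝ := fun k => ((((k : ℝ) + 1 + a) ^ p * (((k : ℝ) + 1 + b) ^ q))⁻¹) with hc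
  have hc01 : ∀ k, 0 < c k ∧ c k ≤ 1 := by
    intro k
    constructor
    · apply inv_pos.mpr
      have h1 := hApow k; have h2 := hBpow k; nlinarith
    · apply inv_le_one_of_one_le₀
      have h1 := hApow k; have h2 := hBpow k; nlinarith
  have hD : (0:ℝ) < (1 + a) ^ p * (1 + b) ^ q :=
    mul_pos (Real.rpow_pos_of_pos (by linarith) p) (Real.rpow_pos_of_pos (by linarith) q)
  have hsum2 : Summable (fun k : ℕ => x ^ (k + 1)) := by
    have := (summable_geometric_of_lt_one hx0.le hx1).mul_right x
    simpa [pow_succ] using this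
  have hsum1 : Summable (fun k : ℕ => c k * x ^ (k + 1)) := by
    apply Summable.of_nonneg_of_le _ _ hsum2
    · intro k; exact mul_nonneg (hc01 k).1.le (pow_nonneg hx0.le _)
    · intro k
      have hxk : (0:ℝ) ≤ x ^ (k+1) := pow_nonneg hx0.le _
      nlinarith [(hc01 k).2, (hc01 k).1]
  have hgen : genPolylogR p q a b x / ((1 + a) ^ p * (1 + b) ^ q)
      = ∑' k : ℕ, c k * x ^ (k + 1) := by
    have : genPolylogR p q a b x
        = ((1 + a) ^ p * (1 + b) ^ q) * ∑' k : ℕ, c k * x ^ (k + 1) := by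
      rw [← tsum_mul_left]
      unfold genPolylogR
      congr 1
      funext k
      rw [hc]
      field_simp
    rw [this, mul_div_cancel_left₀ _ (ne_of_gt hD)]
  have hgeom : x / (1 - x) = ∑' k : ℕ, x ^ (k + 1) := by
    have h1 : ∑' k : ℕ, x ^ (k + 1) = (∑' k : ℕ, x ^ k) * x := by
      rw [← tsum_mul_right]
      simp [pow_succ]
    rw [h1, tsum_geometric_of_lt_one hx0.le hx1, div_eq_mul_inv, mul_comm]
  unfold psiFun
  rw [hgen, hgeom, ← Summable.tsum_sub hsum1 hsum2, mul_div_assoc, ← tsum_mul_right]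
  congr 1
  funext k
  have hxk : x ^ (k+1) ≠ 0 := by positivity
  have hcne : c k = (((k : ℝ) + 1 + b) ^ q)⁻¹ * (((k : ℝ) + 1 + a)⁻¹) ^ p := by
    have hA0 : (0:ℝ) ≤ (k : ℝ) + 1 + a := by linarith [hA k]
    simp only [hc]
    rw [Real.inv_rpow hA0, mul_inv, mul_comm]
  unfold psiTerm
  rw [← hcne]
  field_simp
  ring

section TermFacts

variable {q a b x : ℝ}

lemma castA (ha : 1 < a) : ∀ k : ℕ, (1 : ℝ) < (k : ℝ) + 1 + a := by
  intro k; have := Nat.cast_nonneg (α := ℝ) k; linarith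

lemma psiTerm_nonneg (hq : 0 < q) (ha : 1 < a) (hb : 1 < b) (hx : x ∈ Set.Ioo (0 : ℝ) 1) {α : ℝ} (hα : 0 < α) (k : ℕ) :
    0 ≤ psiTerm q a b x α k := by
  obtain ⟨hx0, hx1⟩ := hx
  have hA := castA ha k
  have hB := castA hb k
  have hrnn : (0:ℝ) ≤ (((k : ℝ) + 1 + a)⁻¹) ^ α :=
    Real.rpow_nonneg (by positivity) α
  have hr1 : (((k : ℝ) + 1 + a)⁻¹) ^ α ≤ 1 :=
    Real.rpow_le_one (by positivity) (inv_le_one_of_one_le₀ hA.le) hα.le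
  have hsnn : (0:ℝ) ≤ ((((k : ℝ) + 1 + b) ^ q)⁻¹) := by positivity
  have hs1 : ((((k : ℝ) + 1 + b) ^ q)⁻¹) ≤ 1 := by
    apply inv_le_one_of_one_le₀
    calc (1:ℝ) = 1 ^ q := (Real.one_rpow q).symm
      _ ≤ ((k : ℝ) + 1 + b) ^ q := Real.rpow_le_rpow zero_le_one hB.le hq.le
  have h2 : ((((k : ℝ) + 1 + b) ^ q)⁻¹) * (((k : ℝ) + 1 + a)⁻¹) ^ α ≤ 1 :=
    mul_le_one₀ hs1 hrnn hr1
  unfold psiTerm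
  apply mul_nonneg
  · exact mul_nonneg (div_nonneg (by linarith) hx0.le) (pow_nonneg hx0.le _)
  · exact div_nonneg (by linarith) hα.le

lemma psiTerm_summable (hq : 0 < q) (ha : 1 < a) (hb : 1 < b) (hx : x ∈ Set.Ioo (0 : ℝ) 1) {α : ℝ} (hα : 0 < α) :
    Summable (psiTerm q a b x α) := by
  obtain ⟨hx0, hx1⟩ := hx
  have hsum2 : Summable (fun k : ℕ => x ^ (k + 1)) := by
    have := (summable_geometric_of_lt_one hx0.le hx1).mul_right x
    simpa [pow_succ] using this
  have hgs : Summable (fun k : ℕ => ((1 - x) / x * (1/α)) * x ^ (k + 1)) :=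
    hsum2.mul_left _
  apply Summable.of_nonneg_of_le (psiTerm_nonneg hq ha hb ⟨hx0, hx1⟩ hα) _ hgs
  intro k
  have hA := castA ha k
  have hB := castA hb k
  have hxk : (0:ℝ) ≤ x ^ (k+1) := pow_nonneg hx0.le _
  have hsr : (0:ℝ) ≤ ((((k : ℝ) + 1 + b) ^ q)⁻¹) * (((k : ℝ) + 1 + a)⁻¹) ^ α := by
    apply mul_nonneg (by positivity) (Real.rpow_nonneg (by positivity) α)
  have hh1 : (1 - ((((k : ℝ) + 1 + b) ^ q)⁻¹) * (((k : ℝ) + 1 + a)⁻¹) ^ α) / α ≤ 1 / α :=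
    (div_le_div_iff_of_pos_right hα).mpr (by linarith)
  calc psiTerm q a b x α k
      ≤ ((1 - x) / x * x ^ (k + 1)) * (1 / α) := by
        unfold psiTerm
        apply mul_le_mul_of_nonneg_left hh1
        exact mul_nonneg (div_nonneg (by linarith) hx0.le) hxk
    _ = ((1 - x) / x * (1/α)) * x ^ (k + 1) := by ring

lemma psiTerm_turan (hq : 0 < q) (ha : 1 < a) (hb : 1 < b) (hx : x ∈ Set.Ioo (0 : ℝ) 1) {p : ℝ} (hp : 0 < p) (k : ℕ) :
    psiTerm q a b x (p+1) k ^ 2 ≤ psiTerm q a b x p k * psiTerm q a b x (p+2) k := by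
  obtain ⟨hx0, hx1⟩ := hx
  have hA := castA ha k
  have hB := castA hb k
  set r : ℝ := ((k : ℝ) + 1 + a)⁻¹ with hrdef
  set s : ℝ := (((k : ℝ) + 1 + b) ^ q)⁻¹ with hsdef
  set w : ℝ := (1 - x) / x * x ^ (k + 1) with hwdef
  have hr0 : 0 < r := by rw [hrdef]; positivity
  have hr1 : r < 1 := by rw [hrdef]; exact inv_lt_one_of_one_lt₀ hA
  have hs0 : 0 ≤ s := by rw [hsdef]; positivity
  have hs1 : s ≤ 1 := by
    rw [hsdef]
    apply inv_le_one_of_one_le₀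
    calc (1:ℝ) = 1 ^ q := (Real.one_rpow q).symm
      _ ≤ ((k : ℝ) + 1 + b) ^ q := Real.rpow_le_rpow zero_le_one hB.le hq.le
  have ht := turan_h hr0 hr1 hs0 hs1 hp
  show (w * ((1 - s * r ^ (p+1)) / (p+1))) ^ 2 ≤
    (w * ((1 - s * r ^ p) / p)) * (w * ((1 - s * r ^ (p+2)) / (p+2)))
  calc (w * ((1 - s * r ^ (p+1)) / (p+1))) ^ 2
      = w ^ 2 * ((1 - s * r ^ (p+1)) / (p+1)) ^ 2 := by ring
    _ ≤ w ^ 2 * (((1 - s * r ^ p) / p) * ((1 - s * r ^ (p+2)) / (p+2))) :=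
        mul_le_mul_of_nonneg_left ht (sq_nonneg w)
    _ = (w * ((1 - s * r ^ p) / p)) * (w * ((1 - s * r ^ (p+2)) / (p+2))) := by ring

end TermFacts

theorem psi_turan_inequality
    (q a b x : ℝ) (hq : 0 < q) (ha : 1 < a) (hb : 1 < b) (hx : x ∈ Set.Ioo (0 : ℝ) 1) :
    ∀ p : ℝ, 0 < p →
      0 ≤ psiFun q a b x p * psiFun q a b x (p + 2) - (psiFun q a b x (p + 1)) ^ 2 := by
  intro p hp
  rw [psi_rep q a b x hq ha hb hx hp, psi_rep q a b x hq ha hb hx (by linarith : (0:ℝ) < p + 1),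
    psi_rep q a b x hq ha hb hx (by linarith : (0:ℝ) < p + 2)]
  have key := tsum_turan (psiTerm_nonneg hq ha hb hx (by linarith : (0:ℝ) < p + 1))
    (psiTerm_nonneg hq ha hb hx hp) (psiTerm_nonneg hq ha hb hx (by linarith : (0:ℝ) < p + 2))
    (psiTerm_turan hq ha hb hx hp)
    (psiTerm_summable hq ha hb hx hp) (psiTerm_summable hq ha hb hx (by linarith : (0:ℝ) < p + 2))
  linarith [key]
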